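/- Let n ≥ 5 and let H be a graph with vertex set {3,4,…,n} which contains no 4-cycle, contains no triangle, and contains no Hamilton path. Then the family F = {X ∈ [n]^(4) : 1 ∈ X, 2 ∈ X, and X∖{1,2} is not an edge of H} admits no (2,2)-acceptable Hamilton cycle in K_n; that is, every Hamilton cycle of K_n contains two disjoint edges whose union is an element of F. -/

import Mathlib

/-- A Hamilton cycle in the complete graph `K_n` is modelled as a cyclic ordering of the
vertex set, i.e. a bijection `c : ZMod n ≃ Fin n`; the vertices of the cycle in cyclic
order are `c 0, c 1, …, c (n-1)`.  `cycInterval c t x` is the interval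
`{c (t+1), c (t+2), …, c (t+x)}` of `x` consecutive vertices of the cycle. -/
def cycInterval {n : ℕ} (c : ZMod n ≃ Fin n) (t : ZMod n) (x : ℕ) : Finset (Fin n) :=
  (Finset.range x).image fun i : ℕ => c (t + (i : ZMod n) + 1)

/-- Given a vector `x = (x₁, …, x_k)` of positive integers and a family `F` of subsets
of the vertex set, a Hamilton cycle `c` of `K_n` is `x`-*acceptable* for `F` if there
do not exist `t₁, …, t_k` such that the union
`⋃ i, {c (tᵢ+1), …, c (tᵢ+xᵢ)}` is an element of `F`. -/
def IsXAcceptable {n k : ℕ} (x : Fin k → ℕ) (F : Set (Finset (Fin n)))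
    (c : ZMod n ≃ Fin n) : Prop :=
  ¬ ∃ t : Fin k → ZMod n,
      (Finset.univ.biUnion fun i : Fin k => cycInterval c (t i) (x i)) ∈ F



private lemma natCast_inj' {n a b : ℕ} (ha : a < n) (hb : b < n) (h : (a : ZMod n) = b) :
    a = b := by
  have := congrArg ZMod.val h
  rwa [ZMod.val_cast_of_lt ha, ZMod.val_cast_of_lt hb] at this

private lemma idx_inj {n : ℕ} (i : ZMod n) {a b : ℕ} (ha : a < n) (hb : b < n)
    (h : i + (a : ZMod n) = i + (b : ZMod n)) : a = b :=
  natCast_inj' ha hb (add_left_cancel h)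

private lemma cidx_ne {n : ℕ} (c : ZMod n ≃ Fin n) (i : ZMod n) {a b : ℕ} (ha : a < n)
    (hb : b < n) (hab : a ≠ b) : c (i + (a : ZMod n)) ≠ c (i + (b : ZMod n)) := fun h =>
  hab (idx_inj i ha hb (c.injective h))

private lemma shiftA {n : ℕ} (i : ZMod n) (a b : ℕ) (h : a + 1 = b) :
    i + (a : ZMod n) + 1 = i + (b : ZMod n) := by subst h; push_cast; ring

private lemma shiftB {n : ℕ} (i : ZMod n) (a b : ℕ) (h : a + 2 = b) :
    i + (a : ZMod n) + 2 = i + (b : ZMod n) := by subst h; push_cast; ring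

private lemma wrapn {n : ℕ} (i : ZMod n) : i + ((n : ℕ) : ZMod n) = i := by
  simp [ZMod.natCast_self]

private lemma cycInterval_two {n : ℕ} (c : ZMod n ≃ Fin n) (t : ZMod n) :
    cycInterval c t 2 = {c (t + 1), c (t + 2)} := by
  have h2 : Finset.range 2 = {0, 1} := by decide
  rw [cycInterval, h2, Finset.image_insert, Finset.image_singleton,
    show t + ((0 : ℕ) : ZMod n) + 1 = t + 1 by push_cast; ring,
    show t + ((1 : ℕ) : ZMod n) + 1 = t + 2 by push_cast; ring]

private lemma walk_of_chain {V : Type*} {G : SimpleGraph V} :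
    ∀ (l : List V) (a : V), List.Chain G.Adj a l →
      ∃ b, ∃ p : G.Walk a b, p.support = a :: l := by
  intro l
  induction l with
  | nil => exact fun a _ => ⟨a, SimpleGraph.Walk.nil, rfl⟩
  | cons x l ih =>
    intro a h
    simp only [List.Chain, List.isChain_cons_cons] at h
    obtain ⟨b, p, hp⟩ := ih x h.2
    exact ⟨b, SimpleGraph.Walk.cons h.1 p, by rw [SimpleGraph.Walk.support_cons, hp]⟩

private lemma upat0 {α : Type*} [DecidableEq α] (a b x y : α) :
    ({a, b} : Finset α) ∪ {x, y} = {a, b, x, y} := by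
  ext z; simp only [Finset.mem_union, Finset.mem_insert, Finset.mem_singleton]; tauto

private lemma upat1 {α : Type*} [DecidableEq α] (a b x y : α) :
    ({a, x} : Finset α) ∪ {b, y} = {a, b, x, y} := by
  ext z; simp only [Finset.mem_union, Finset.mem_insert, Finset.mem_singleton]; tauto

private lemma upat2 {α : Type*} [DecidableEq α] (a b x y : α) :
    ({x, a} : Finset α) ∪ {b, y} = {a, b, x, y} := by
  ext z; simp only [Finset.mem_union, Finset.mem_insert, Finset.mem_singleton]; tauto

private lemma upat3 {α : Type*} [DecidableEq α] (a b x y : α) :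
    ({x, a} : Finset α) ∪ {y, b} = {a, b, x, y} := by
  ext z; simp only [Finset.mem_union, Finset.mem_insert, Finset.mem_singleton]; tauto

private lemma upat4 {α : Type*} [DecidableEq α] (a b x y : α) :
    ({a, x} : Finset α) ∪ {y, b} = {a, b, x, y} := by
  ext z; simp only [Finset.mem_union, Finset.mem_insert, Finset.mem_singleton]; tauto

private def gfun {n : ℕ} (c : ZMod n ≃ Fin n) (i : ZMod n)
    (hoff : ∀ a : ℕ, a < n → a ≠ 0 → a ≠ 1 → 2 ≤ ((c (i + (a : ZMod n))) : ℕ))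
    (k : ℕ) (hk : k < n - 2) : {v : Fin n // 2 ≤ (v : ℕ)} :=
  ⟨c (i + ((k + 2 : ℕ) : ZMod n)), hoff (k + 2) (by omega) (by omega) (by omega)⟩

private lemma gfun_val {n : ℕ} (c : ZMod n ≃ Fin n) (i : ZMod n)
    (hoff : ∀ a : ℕ, a < n → a ≠ 0 → a ≠ 1 → 2 ≤ ((c (i + (a : ZMod n))) : ℕ))
    (k : ℕ) (hk : k < n - 2) :
    (gfun c i hoff k hk).1 = c (i + ((k + 2 : ℕ) : ZMod n)) := rfl

private lemma subA {n : ℕ} (hn : 5 ≤ n) (H : SimpleGraph {v : Fin n // 2 ≤ (v : ℕ)})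
    (hNoHamPath : ¬ ∃ (u v : {v : Fin n // 2 ≤ (v : ℕ)}) (p : H.Walk u v), p.IsHamiltonian)
    (c : ZMod n ≃ Fin n) (i : ZMod n) (v0 v1 : Fin n)
    (hv0 : c i = v0) (hv1 : c (i + ((1 : ℕ) : ZMod n)) = v1)
    (h0 : (v0 : ℕ) < 2) (h1 : (v1 : ℕ) < 2) :
    ∃ (t0 t1 : ZMod n) (u w : {v : Fin n // 2 ≤ (v : ℕ)}), u ≠ w ∧ ¬ H.Adj u w ∧
      cycInterval c t0 2 ∪ cycInterval c t1 2 = {v0, v1, u.1, w.1} := by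
  haveI : NeZero n := ⟨by omega⟩
  have hv0' : c (i + ((0 : ℕ) : ZMod n)) = v0 := by simpa using hv0
  have hne : v0 ≠ v1 := by
    rw [← hv0', ← hv1]
    exact cidx_ne c i (by omega) (by omega) (by omega)
  have hge : ∀ x : Fin n, x ≠ v0 → x ≠ v1 → 2 ≤ (x : ℕ) := by
    intro x hx0 hx1
    have e0 : (x : ℕ) ≠ (v0 : ℕ) := fun h => hx0 (Fin.ext h)
    have e1 : (x : ℕ) ≠ (v1 : ℕ) := fun h => hx1 (Fin.ext h)
    have e01 : (v0 : ℕ) ≠ (v1 : ℕ) := fun h => hne (Fin.ext h)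
    omega
  have hoff : ∀ a : ℕ, a < n → a ≠ 0 → a ≠ 1 → 2 ≤ ((c (i + (a : ZMod n))) : ℕ) := by
    intro a ha ha0 ha1
    refine hge _ ?_ ?_
    · rw [← hv0']; exact cidx_ne c i ha (by omega) ha0
    · rw [← hv1]; exact cidx_ne c i ha (by omega) ha1
  by_cases hex : ∃ k : ℕ, ∃ hk : k < n - 3, ¬ H.Adj (gfun c i hoff k (by omega)) (gfun c i hoff (k + 1) (by omega))
  · obtain ⟨k, hk, hnadj⟩ := hex
    refine ⟨i - 1, i + ((k + 1 : ℕ) : ZMod n), gfun c i hoff k (by omega), gfun c i hoff (k + 1) (by omega), ?_, hnadj, ?_⟩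
    · intro h
      exact cidx_ne c i (show k + 2 < n by omega) (show k + 3 < n by omega) (by omega)
        (congrArg Subtype.val h)
    · rw [cycInterval_two, cycInterval_two,
        show i - 1 + 1 = i + ((0 : ℕ) : ZMod n) by push_cast; ring,
        show i - 1 + 2 = i + ((1 : ℕ) : ZMod n) by push_cast; ring,
        shiftA i (k + 1) (k + 2) rfl, shiftB i (k + 1) (k + 3) rfl, hv0', hv1]
      exact upat0 (v0) (v1) (c (i + ((k + 2 : ℕ) : ZMod n))) (c (i + ((k + 3 : ℕ) : ZMod n)))
  · push_neg at hex
    exfalso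
    set L : List {v : Fin n // 2 ≤ (v : ℕ)} :=
      List.pmap (gfun c i hoff) (List.range (n - 2)) (fun k hk => List.mem_range.mp hk) with hLdef
    have hlen : L.length = n - 2 := by simp [hLdef]
    have hget : ∀ (k : ℕ) (hk : k < L.length), L.get ⟨k, hk⟩ = gfun c i hoff k (by rwa [hlen] at hk) := by
      intro k hk
      simp only [hLdef, List.get_eq_getElem, List.getElem_pmap, List.getElem_range]
    have hnodup : L.Nodup := by
      rw [List.nodup_iff_injective_get]
      rintro ⟨a, ha⟩ ⟨b, hb⟩ h
      rw [hget a ha, hget b hb] at h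
      have := c.injective (congrArg Subtype.val h)
      have hab := idx_inj i (show a + 2 < n by rw [hlen] at ha; omega)
        (show b + 2 < n by rw [hlen] at hb; omega) this
      exact Fin.ext (show a = b by omega)
    have hchain : L.Chain' H.Adj := by
      show L.IsChain H.Adj
      rw [List.isChain_iff_getElem]
      intro k hk
      have e1 := hget k (by omega)
      have e2 := hget (k + 1) hk
      simp only [List.get_eq_getElem] at e1 e2
      rw [e1, e2]
      exact hex k (by rw [hlen] at hk; omega)
    have hmem : ∀ v : {v : Fin n // 2 ≤ (v : ℕ)}, v ∈ L := by
      intro v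
      have hcj : c (c.symm v.1) = v.1 := c.apply_symm_apply v.1
      set j := c.symm v.1 with hjdef
      have hj0 : j ≠ i := by
        intro h
        have := v.2
        rw [show v.1 = v0 by rw [← hcj, h, hv0]] at this
        omega
      have hj1 : j ≠ i + ((1 : ℕ) : ZMod n) := by
        intro h
        have := v.2
        rw [show v.1 = v1 by rw [← hcj, h, hv1]] at this
        omega
      have hvalcast : (((j - i).val : ℕ) : ZMod n) = j - i := by
        rw [ZMod.natCast_val, ZMod.cast_id]
      have hev : (j - i).val < n := ZMod.val_lt _
      have hev0 : (j - i).val ≠ 0 := by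
        intro h
        exact hj0 (by have : j - i = 0 := by rwa [ZMod.val_eq_zero] at h
                      have := sub_eq_zero.mp this; exact this)
      have hev1 : (j - i).val ≠ 1 := by
        intro h
        apply hj1
        have : j - i = ((1 : ℕ) : ZMod n) := by rw [← hvalcast, h]
        rw [← this]; ring
      refine List.mem_iff_get.mpr ⟨⟨(j - i).val - 2, by rw [hlen]; omega⟩, ?_⟩
      rw [hget]
      apply Subtype.ext
      show c (i + (((j - i).val - 2 + 2 : ℕ) : ZMod n)) = v.1
      rw [show (j - i).val - 2 + 2 = (j - i).val by omega, hvalcast,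
        show i + (j - i) = j by ring, hcj]
    have hLne : L ≠ [] := by
      intro h
      rw [h] at hlen
      simp at hlen
      omega
    have hchain2 : List.Chain H.Adj (L.head hLne) L.tail := by
      have := hchain
      rw [← List.cons_head_tail hLne] at this
      exact this
    obtain ⟨b, p, hp⟩ := walk_of_chain L.tail (L.head hLne) hchain2
    refine hNoHamPath ⟨_, b, p, ?_⟩
    intro v
    have hsup : p.support = L := by rw [hp, List.cons_head_tail]
    rw [hsup]
    convert List.count_eq_one_of_mem hnodup (hmem v)

set_option maxHeartbeats 1000000 in
private lemma subB {n : ℕ} (hn : 5 ≤ n) (H : SimpleGraph {v : Fin n // 2 ≤ (v : ℕ)})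
    (hTrianglefree : H.CliqueFree 3)
    (c : ZMod n ≃ Fin n) (i : ZMod n) (v0 v1 : Fin n)
    (hv0 : c i = v0) (hv1 : c (i + ((2 : ℕ) : ZMod n)) = v1)
    (h0 : (v0 : ℕ) < 2) (h1 : (v1 : ℕ) < 2) :
    ∃ (t0 t1 : ZMod n) (u w : {v : Fin n // 2 ≤ (v : ℕ)}), u ≠ w ∧ ¬ H.Adj u w ∧
      cycInterval c t0 2 ∪ cycInterval c t1 2 = {v0, v1, u.1, w.1} := by
  haveI : NeZero n := ⟨by omega⟩
  have hv0' : c (i + ((0 : ℕ) : ZMod n)) = v0 := by simpa using hv0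
  have hne : v0 ≠ v1 := by
    rw [← hv0', ← hv1]
    exact cidx_ne c i (by omega) (by omega) (by omega)
  have hge : ∀ x : Fin n, x ≠ v0 → x ≠ v1 → 2 ≤ (x : ℕ) := by
    intro x hx0 hx1
    have e0 : (x : ℕ) ≠ (v0 : ℕ) := fun h => hx0 (Fin.ext h)
    have e1 : (x : ℕ) ≠ (v1 : ℕ) := fun h => hx1 (Fin.ext h)
    have e01 : (v0 : ℕ) ≠ (v1 : ℕ) := fun h => hne (Fin.ext h)
    omega
  have hoff : ∀ a : ℕ, a < n → a ≠ 0 → a ≠ 2 → 2 ≤ ((c (i + (a : ZMod n))) : ℕ) := by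
    intro a ha ha0 ha2
    refine hge _ ?_ ?_
    · rw [← hv0']; exact cidx_ne c i ha (by omega) ha0
    · rw [← hv1]; exact cidx_ne c i ha (by omega) ha2
  refine let P : {v : Fin n // 2 ≤ (v : ℕ)} :=
    ⟨c (i + ((1 : ℕ) : ZMod n)), hoff 1 (by omega) (by omega) (by omega)⟩
  let Q : {v : Fin n // 2 ≤ (v : ℕ)} :=
    ⟨c (i + ((n - 1 : ℕ) : ZMod n)), hoff (n - 1) (by omega) (by omega) (by omega)⟩
  let R : {v : Fin n // 2 ≤ (v : ℕ)} :=
    ⟨c (i + ((3 : ℕ) : ZMod n)), hoff 3 (by omega) (by omega) (by omega)⟩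
  ?_
  have hQP : Q ≠ P := fun h =>
    cidx_ne c i (show n - 1 < n by omega) (show 1 < n by omega) (by omega)
      (congrArg Subtype.val h)
  have hQR : Q ≠ R := fun h =>
    cidx_ne c i (show n - 1 < n by omega) (show 3 < n by omega) (by omega)
      (congrArg Subtype.val h)
  have hPR : P ≠ R := fun h =>
    cidx_ne c i (show 1 < n by omega) (show 3 < n by omega) (by omega)
      (congrArg Subtype.val h)
  have hTri : ¬ (H.Adj Q P ∧ H.Adj Q R ∧ H.Adj P R) := by
    rintro ⟨ha, hb, hc⟩
    exact hTrianglefree {Q, P, R} (SimpleGraph.is3Clique_triple_iff.mpr ⟨ha, hb, hc⟩)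
  by_cases hqp : H.Adj Q P
  · by_cases hqr : H.Adj Q R
    · refine ⟨i + ((n - 1 : ℕ) : ZMod n), i + ((1 : ℕ) : ZMod n), P, R, hPR,
        fun h => hTri ⟨hqp, hqr, h⟩, ?_⟩
      rw [cycInterval_two, cycInterval_two, shiftA i (n - 1) n (by omega), wrapn,
        shiftB i (n - 1) (n + 1) (by omega),
        show ((n + 1 : ℕ) : ZMod n) = ((1 : ℕ) : ZMod n) by
          push_cast [ZMod.natCast_self]; ring,
        shiftA i 1 2 (by omega), shiftB i 1 3 (by omega), hv0, hv1]
      exact upat1 (v0) (v1) (c (i + ((1 : ℕ) : ZMod n))) (c (i + ((3 : ℕ) : ZMod n)))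
    · refine ⟨i + ((n - 2 : ℕ) : ZMod n), i + ((1 : ℕ) : ZMod n), Q, R, hQR, hqr, ?_⟩
      rw [cycInterval_two, cycInterval_two, shiftA i (n - 2) (n - 1) (by omega),
        shiftB i (n - 2) n (by omega), wrapn,
        shiftA i 1 2 (by omega), shiftB i 1 3 (by omega), hv0, hv1]
      exact upat2 (v0) (v1) (c (i + ((n - 1 : ℕ) : ZMod n))) (c (i + ((3 : ℕ) : ZMod n)))
  · refine ⟨i + ((n - 2 : ℕ) : ZMod n), i, Q, P, hQP, hqp, ?_⟩
    rw [cycInterval_two, cycInterval_two, shiftA i (n - 2) (n - 1) (by omega),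
      shiftB i (n - 2) n (by omega), wrapn,
      show i + 1 = i + ((1 : ℕ) : ZMod n) by push_cast; ring,
      show i + 2 = i + ((2 : ℕ) : ZMod n) by push_cast; ring, hv0, hv1]
    exact upat3 (v0) (v1) (c (i + ((n - 1 : ℕ) : ZMod n))) (c (i + ((1 : ℕ) : ZMod n)))

set_option maxHeartbeats 1000000 in
private lemma subC {n : ℕ} (hn : 5 ≤ n) (H : SimpleGraph {v : Fin n // 2 ≤ (v : ℕ)})
    (hC4free : ∀ a b c d : {v : Fin n // 2 ≤ (v : ℕ)}, a ≠ c → b ≠ d →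
      H.Adj a b → H.Adj b c → H.Adj c d → ¬ H.Adj d a)
    (c : ZMod n ≃ Fin n) (i : ZMod n) (v0 v1 : Fin n) (D : ℕ)
    (hD3 : 3 ≤ D) (hDn : D ≤ n - 3)
    (hv0 : c i = v0) (hv1 : c (i + ((D : ℕ) : ZMod n)) = v1)
    (h0 : (v0 : ℕ) < 2) (h1 : (v1 : ℕ) < 2) :
    ∃ (t0 t1 : ZMod n) (u w : {v : Fin n // 2 ≤ (v : ℕ)}), u ≠ w ∧ ¬ H.Adj u w ∧
      cycInterval c t0 2 ∪ cycInterval c t1 2 = {v0, v1, u.1, w.1} := by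
  haveI : NeZero n := ⟨by omega⟩
  have hv0' : c (i + ((0 : ℕ) : ZMod n)) = v0 := by simpa using hv0
  have hne : v0 ≠ v1 := by
    rw [← hv0', ← hv1]
    exact cidx_ne c i (by omega) (by omega) (by omega)
  have hge : ∀ x : Fin n, x ≠ v0 → x ≠ v1 → 2 ≤ (x : ℕ) := by
    intro x hx0 hx1
    have e0 : (x : ℕ) ≠ (v0 : ℕ) := fun h => hx0 (Fin.ext h)
    have e1 : (x : ℕ) ≠ (v1 : ℕ) := fun h => hx1 (Fin.ext h)
    have e01 : (v0 : ℕ) ≠ (v1 : ℕ) := fun h => hne (Fin.ext h)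
    omega
  have hoff : ∀ a : ℕ, a < n → a ≠ 0 → a ≠ D → 2 ≤ ((c (i + (a : ZMod n))) : ℕ) := by
    intro a ha ha0 haD
    refine hge _ ?_ ?_
    · rw [← hv0']; exact cidx_ne c i ha (by omega) ha0
    · rw [← hv1]; exact cidx_ne c i ha (by omega) haD
  refine let P : {v : Fin n // 2 ≤ (v : ℕ)} :=
    ⟨c (i + ((1 : ℕ) : ZMod n)), hoff 1 (by omega) (by omega) (by omega)⟩
  let Q : {v : Fin n // 2 ≤ (v : ℕ)} :=
    ⟨c (i + ((n - 1 : ℕ) : ZMod n)), hoff (n - 1) (by omega) (by omega) (by omega)⟩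
  let R : {v : Fin n // 2 ≤ (v : ℕ)} :=
    ⟨c (i + ((D + 1 : ℕ) : ZMod n)), hoff (D + 1) (by omega) (by omega) (by omega)⟩
  let S : {v : Fin n // 2 ≤ (v : ℕ)} :=
    ⟨c (i + ((D - 1 : ℕ) : ZMod n)), hoff (D - 1) (by omega) (by omega) (by omega)⟩
  ?_
  have hPQ : P ≠ Q := fun h =>
    cidx_ne c i (show 1 < n by omega) (show n - 1 < n by omega) (by omega)
      (congrArg Subtype.val h)
  have hRS : R ≠ S := fun h =>
    cidx_ne c i (show D + 1 < n by omega) (show D - 1 < n by omega) (by omega)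
      (congrArg Subtype.val h)
  have hPR : P ≠ R := fun h =>
    cidx_ne c i (show 1 < n by omega) (show D + 1 < n by omega) (by omega)
      (congrArg Subtype.val h)
  have hPS : P ≠ S := fun h =>
    cidx_ne c i (show 1 < n by omega) (show D - 1 < n by omega) (by omega)
      (congrArg Subtype.val h)
  have hQR : Q ≠ R := fun h =>
    cidx_ne c i (show n - 1 < n by omega) (show D + 1 < n by omega) (by omega)
      (congrArg Subtype.val h)
  have hQS : Q ≠ S := fun h =>
    cidx_ne c i (show n - 1 < n by omega) (show D - 1 < n by omega) (by omega)
      (congrArg Subtype.val h)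
  have h4 : ¬ (H.Adj P R ∧ H.Adj P S ∧ H.Adj Q R ∧ H.Adj Q S) := by
    rintro ⟨ha, hb, hc, hd⟩
    exact hC4free P R Q S hPQ hRS ha hc.symm hd hb.symm
  by_cases hpr : H.Adj P R
  · by_cases hps : H.Adj P S
    · by_cases hqr : H.Adj Q R
      · -- ¬ Adj Q S
        refine ⟨i + ((n - 2 : ℕ) : ZMod n), i + ((D - 2 : ℕ) : ZMod n), Q, S, hQS,
          fun h => h4 ⟨hpr, hps, hqr, h⟩, ?_⟩
        rw [cycInterval_two, cycInterval_two, shiftA i (n - 2) (n - 1) (by omega),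
          shiftB i (n - 2) n (by omega), wrapn,
          shiftA i (D - 2) (D - 1) (by omega), shiftB i (D - 2) D (by omega), hv0, hv1]
        exact upat3 (v0) (v1) (c (i + ((n - 1 : ℕ) : ZMod n))) (c (i + ((D - 1 : ℕ) : ZMod n)))
      · refine ⟨i + ((n - 2 : ℕ) : ZMod n), i + ((D - 1 : ℕ) : ZMod n), Q, R, hQR, hqr, ?_⟩
        rw [cycInterval_two, cycInterval_two, shiftA i (n - 2) (n - 1) (by omega),
          shiftB i (n - 2) n (by omega), wrapn,
          shiftA i (D - 1) D (by omega), shiftB i (D - 1) (D + 1) (by omega), hv0, hv1]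
        exact upat2 (v0) (v1) (c (i + ((n - 1 : ℕ) : ZMod n))) (c (i + ((D + 1 : ℕ) : ZMod n)))
    · refine ⟨i + ((n - 1 : ℕ) : ZMod n), i + ((D - 2 : ℕ) : ZMod n), P, S, hPS, hps, ?_⟩
      rw [cycInterval_two, cycInterval_two, shiftA i (n - 1) n (by omega), wrapn,
        shiftB i (n - 1) (n + 1) (by omega),
        show ((n + 1 : ℕ) : ZMod n) = ((1 : ℕ) : ZMod n) by
          push_cast [ZMod.natCast_self]; ring,
        shiftA i (D - 2) (D - 1) (by omega), shiftB i (D - 2) D (by omega), hv0, hv1]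
      exact upat4 (v0) (v1) (c (i + ((1 : ℕ) : ZMod n))) (c (i + ((D - 1 : ℕ) : ZMod n)))
  · refine ⟨i + ((n - 1 : ℕ) : ZMod n), i + ((D - 1 : ℕ) : ZMod n), P, R, hPR, hpr, ?_⟩
    rw [cycInterval_two, cycInterval_two, shiftA i (n - 1) n (by omega), wrapn,
      shiftB i (n - 1) (n + 1) (by omega),
      show ((n + 1 : ℕ) : ZMod n) = ((1 : ℕ) : ZMod n) by
        push_cast [ZMod.natCast_self]; ring,
      shiftA i (D - 1) D (by omega), shiftB i (D - 1) (D + 1) (by omega), hv0, hv1]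
    exact upat1 (v0) (v1) (c (i + ((1 : ℕ) : ZMod n))) (c (i + ((D + 1 : ℕ) : ZMod n)))

private lemma helper {n : ℕ} (hn : 5 ≤ n) (H : SimpleGraph {v : Fin n // 2 ≤ (v : ℕ)})
    (hC4free : ∀ a b c d : {v : Fin n // 2 ≤ (v : ℕ)}, a ≠ c → b ≠ d →
      H.Adj a b → H.Adj b c → H.Adj c d → ¬ H.Adj d a)
    (hTrianglefree : H.CliqueFree 3)
    (hNoHamPath : ¬ ∃ (u v : {v : Fin n // 2 ≤ (v : ℕ)}) (p : H.Walk u v), p.IsHamiltonian)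
    (c : ZMod n ≃ Fin n) (v0 v1 : Fin n) (hne : v0 ≠ v1)
    (h0 : (v0 : ℕ) < 2) (h1 : (v1 : ℕ) < 2) :
    ∃ (t0 t1 : ZMod n) (u w : {v : Fin n // 2 ≤ (v : ℕ)}), u ≠ w ∧ ¬ H.Adj u w ∧
      cycInterval c t0 2 ∪ cycInterval c t1 2 = {v0, v1, u.1, w.1} := by
  haveI : NeZero n := ⟨by omega⟩
  set i := c.symm v0 with hidef
  set j := c.symm v1 with hjdef
  have hv0 : c i = v0 := c.apply_symm_apply v0
  have hv1 : c j = v1 := c.apply_symm_apply v1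
  set D := (j - i).val with hDdef
  have hcd : i + ((D : ℕ) : ZMod n) = j := by
    rw [hDdef, ZMod.natCast_val, ZMod.cast_id]; ring
  have hDlt : D < n := ZMod.val_lt _
  have hD0 : D ≠ 0 := by
    intro h
    apply hne
    have hji : j - i = 0 := by rwa [ZMod.val_eq_zero] at h
    rw [← hv0, ← hv1, sub_eq_zero.mp hji]
  by_cases hd1 : D = 1
  · exact subA hn H hNoHamPath c i v0 v1 hv0 (by rw [← hd1, hcd, hv1]) h0 h1
  by_cases hd2 : D = 2
  · exact subB hn H hTrianglefree c i v0 v1 hv0 (by rw [← hd2, hcd, hv1]) h0 h1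
  by_cases hd3 : D ≤ n - 3
  · exact subC hn H hC4free c i v0 v1 D (by omega) hd3 hv0 (by rw [hcd, hv1]) h0 h1
  by_cases hd4 : D = n - 2
  · have hji : c (j + ((2 : ℕ) : ZMod n)) = v0 := by
      rw [← hcd, show i + ((D : ℕ) : ZMod n) + ((2 : ℕ) : ZMod n) = i + ((D + 2 : ℕ) : ZMod n)
        by push_cast; ring, hd4, show n - 2 + 2 = n by omega, wrapn, hv0]
    obtain ⟨t0, t1, u, w, huw, hadj, hset⟩ :=
      subB hn H hTrianglefree c j v1 v0 hv1 hji h1 h0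
    exact ⟨t0, t1, u, w, huw, hadj, by rw [hset, Finset.insert_comm]⟩
  · have hd5 : D = n - 1 := by omega
    have hji : c (j + ((1 : ℕ) : ZMod n)) = v0 := by
      rw [← hcd, show i + ((D : ℕ) : ZMod n) + ((1 : ℕ) : ZMod n) = i + ((D + 1 : ℕ) : ZMod n)
        by push_cast; ring, hd5, show n - 1 + 1 = n by omega, wrapn, hv0]
    obtain ⟨t0, t1, u, w, huw, hadj, hset⟩ :=
      subA hn H hNoHamPath c j v1 v0 hv1 hji h1 h0
    exact ⟨t0, t1, u, w, huw, hadj, by rw [hset, Finset.insert_comm]⟩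

/-- **Construction behind the upper bound for `x = (2,2)`.**  Let `n ≥ 5` and let `H` be
a graph on the vertex set `{3, 4, …, n}` (modelled as the elements of `Fin n` of value
`≥ 2`, with vertex `i ∈ [n]` corresponding to the element of value `i − 1`, so that
`1, 2 ∈ [n]` correspond to the values `0, 1`) which contains no 4-cycle, contains no
triangle and contains no Hamilton path.  Then the family
`F = {X ∈ [n]^(4) : 1 ∈ X, 2 ∈ X, X ∖ {1,2} ∉ E(H)}` admits no `(2,2)`-acceptable
Hamilton cycle in `K_n`: every Hamilton cycle of `K_n` contains two disjoint edges
whose union is a member of `F`. -/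
theorem blocking_family_from_C4_free_graph (n : ℕ) (hn : 5 ≤ n)
    (H : SimpleGraph {v : Fin n // 2 ≤ (v : ℕ)})
    (hC4free : ∀ a b c d : {v : Fin n // 2 ≤ (v : ℕ)}, a ≠ c → b ≠ d →
      H.Adj a b → H.Adj b c → H.Adj c d → ¬ H.Adj d a)
    (hTrianglefree : H.CliqueFree 3)
    (hNoHamPath : ¬ ∃ (u v : {v : Fin n // 2 ≤ (v : ℕ)}) (p : H.Walk u v),
      p.IsHamiltonian) :
    ∀ c : ZMod n ≃ Fin n,
      ¬ IsXAcceptable ![2, 2]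
        {X : Finset (Fin n) | X.card = 4 ∧
          (⟨0, by omega⟩ : Fin n) ∈ X ∧ (⟨1, by omega⟩ : Fin n) ∈ X ∧
          ¬ ∃ a b : {v : Fin n // 2 ≤ (v : ℕ)}, H.Adj a b ∧
            X = {⟨0, by omega⟩, ⟨1, by omega⟩, a.1, b.1}} c := by
  intro c
  have hv01 : (⟨0, by omega⟩ : Fin n) ≠ (⟨1, by omega⟩ : Fin n) := by
    intro h
    exact absurd (congrArg Fin.val h) (by norm_num)
  obtain ⟨t0, t1, u, w, huw, hnadj, hset⟩ :=
    helper hn H hC4free hTrianglefree hNoHamPath c ⟨0, by omega⟩ ⟨1, by omega⟩ hv01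
      (by norm_num) (by norm_num)
  unfold IsXAcceptable
  rw [not_not]
  refine ⟨![t0, t1], ?_⟩
  have hbi : (Finset.univ.biUnion fun i : Fin 2 => cycInterval c (![t0, t1] i) (![2, 2] i))
      = cycInterval c t0 2 ∪ cycInterval c t1 2 := by
    rw [show (Finset.univ : Finset (Fin 2)) = {0, 1} by decide,
      Finset.biUnion_insert, Finset.singleton_biUnion]
    rfl
  rw [Set.mem_setOf_eq, hbi, hset]
  have h0u : (⟨0, by omega⟩ : Fin n) ≠ u.1 := by
    intro h
    have := u.2
    rw [← h] at this
    exact absurd this (by norm_num)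
  have h0w : (⟨0, by omega⟩ : Fin n) ≠ w.1 := by
    intro h
    have := w.2
    rw [← h] at this
    exact absurd this (by norm_num)
  have h1u : (⟨1, by omega⟩ : Fin n) ≠ u.1 := by
    intro h
    have := u.2
    rw [← h] at this
    exact absurd this (by norm_num)
  have h1w : (⟨1, by omega⟩ : Fin n) ≠ w.1 := by
    intro h
    have := w.2
    rw [← h] at this
    exact absurd this (by norm_num)
  have huw' : u.1 ≠ w.1 := fun h => huw (Subtype.ext h)
  refine ⟨?_, ?_, ?_, ?_⟩
  · rw [Finset.card_insert_of_notMem (by simp [hv01, h0u, h0w]),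
      Finset.card_insert_of_notMem (by simp [h1u, h1w]),
      Finset.card_insert_of_notMem (by simp [huw']), Finset.card_singleton]
  · simp
  · simp
  · rintro ⟨a, b, hab, hX⟩
    have hane : a ≠ b := hab.ne
    have ha : a.1 ∈ ({⟨0, by omega⟩, ⟨1, by omega⟩, u.1, w.1} : Finset (Fin n)) := by
      rw [hX]; simp
    have hb : b.1 ∈ ({⟨0, by omega⟩, ⟨1, by omega⟩, u.1, w.1} : Finset (Fin n)) := by
      rw [hX]; simp
    simp only [Finset.mem_insert, Finset.mem_singleton] at ha hb
    have ha2 := a.2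
    have hb2 := b.2
    have hau : a = u ∨ a = w := by
      rcases ha with h | h | h | h
      · rw [h] at ha2; norm_num at ha2
      · rw [h] at ha2; norm_num at ha2
      · exact Or.inl (Subtype.ext h)
      · exact Or.inr (Subtype.ext h)
    have hbu : b = u ∨ b = w := by
      rcases hb with h | h | h | h
      · rw [h] at hb2; norm_num at hb2
      · rw [h] at hb2; norm_num at hb2
      · exact Or.inl (Subtype.ext h)
      · exact Or.inr (Subtype.ext h)
    rcases hau with rfl | rfl <;> rcases hbu with rfl | rfl
    · exact hane rfl
    · exact hnadj hab
    · exact hnadj hab.symm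
    · exact hane rfl
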